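/- Let (V,w) be a weighted graph, let k < h ≤ |V| be integers, and let H ⊆ V be a set of h vertices such that every vertex of H has weighted degree at least the weighted degree of every vertex of V∖H. Let S ⊆ V with |S| = k and S∖H ≠ ∅. Then there exist vertices i ∈ H∖S and j ∈ S∖H such that δ_w((S∖{j})∪{i}) ≥ (1 − 2/(h−k))·δ_w(S). (Local exchange lemma, Lemma 2.2.) -/

import Mathlib

open Finset

/-- The cut value of a set `S`: total weight of pairs with exactly one endpoint in `S`. -/
noncomputable def cutVal {V : Type*} [Fintype V] [DecidableEq V]
    (w : V → V → ℝ) (S : Finset V) : ℝ :=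
  ∑ u ∈ S, ∑ v ∈ Sᶜ, w u v

/-- The weighted degree of a vertex `v`. -/
noncomputable def wdeg {V : Type*} [Fintype V] [DecidableEq V]
    (w : V → V → ℝ) (v : V) : ℝ :=
  ∑ u ∈ Finset.univ.erase v, w u v

lemma cutVal_insert {V : Type*} [Fintype V] [DecidableEq V]
    (w : V → V → ℝ) (hsymm : ∀ u v, w u v = w v u)
    (T : Finset V) (i : V) (hi : i ∉ T) :
    cutVal w (insert i T) = cutVal w T + wdeg w i - 2 * ∑ u ∈ T, w i u := by
  have hcompl : (insert i T)ᶜ = Tᶜ.erase i := by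
    ext v; simp [Finset.mem_erase, not_or, and_comm]
  have hiTc : i ∈ Tᶜ := by simpa using hi
  rw [cutVal, Finset.sum_insert hi, hcompl]
  have h1 : ∑ v ∈ Tᶜ.erase i, w i v = wdeg w i - ∑ v ∈ T, w i v := by
    have hset : Tᶜ.erase i = (Finset.univ.erase i) \ T := by
      ext v
      simp only [Finset.mem_erase, Finset.mem_compl, Finset.mem_sdiff, Finset.mem_univ,
        and_true, true_and]
    have hsub : T ⊆ Finset.univ.erase i := by
      intro v hv
      simp only [Finset.mem_erase, Finset.mem_univ, and_true]
      rintro rfl; exact hi hv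
    rw [hset, Finset.sum_sdiff_eq_sub hsub]
    congr 1
    rw [wdeg]
    exact Finset.sum_congr rfl fun u _ => (hsymm u i).symm
  have h2 : ∑ u ∈ T, ∑ v ∈ Tᶜ.erase i, w u v
      = cutVal w T - ∑ u ∈ T, w u i := by
    rw [cutVal, ← Finset.sum_sub_distrib]
    exact Finset.sum_congr rfl fun u _ => (Finset.sum_erase_eq_sub hiTc)
  have h3 : ∑ u ∈ T, w u i = ∑ u ∈ T, w i u :=
    Finset.sum_congr rfl fun u _ => hsymm u i
  rw [h1, h2, h3]; ring

theorem local_exchange {V : Type*} [Fintype V] [DecidableEq V]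
    (w : V → V → ℝ) (hsymm : ∀ u v, w u v = w v u) (hnonneg : ∀ u v, 0 ≤ w u v)
    (k h : ℕ) (hkh : k < h) (hhV : h ≤ Fintype.card V)
    (H : Finset V) (hHcard : H.card = h)
    (hdeg : ∀ u ∈ H, ∀ v ∉ H, wdeg w v ≤ wdeg w u)
    (S : Finset V) (hScard : S.card = k) (hSH : (S \ H).Nonempty) :
    ∃ i ∈ H \ S, ∃ j ∈ S \ H,
      (1 - 2 / ((h : ℝ) - (k : ℝ))) * cutVal w S ≤ cutVal w (insert i (S.erase j)) := by
  obtain ⟨j, hj⟩ := hSH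
  have hjS : j ∈ S := (Finset.mem_sdiff.mp hj).1
  have hjH : j ∉ H := (Finset.mem_sdiff.mp hj).2
  have hcardHS : h - k ≤ (H \ S).card := by
    have := Finset.le_card_sdiff S H
    omega
  have hHSne : (H \ S).Nonempty := by
    rw [← Finset.card_pos]; omega
  -- choose i minimizing the weight into S.erase j
  obtain ⟨i, hiHS, hmin⟩ := Finset.exists_min_image (H \ S)
    (fun i => ∑ u ∈ S.erase j, w i u) hHSne
  have hiH : i ∈ H := (Finset.mem_sdiff.mp hiHS).1
  have hiS : i ∉ S := (Finset.mem_sdiff.mp hiHS).2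
  refine ⟨i, hiHS, j, hj, ?_⟩
  set C := cutVal w S with hC
  set A := ∑ u ∈ S.erase j, w i u with hA
  have hA0 : 0 ≤ A := Finset.sum_nonneg fun u _ => hnonneg i u
  have hC0 : 0 ≤ C := Finset.sum_nonneg fun u _ =>
    Finset.sum_nonneg fun v _ => hnonneg u v
  have hhk : (0:ℝ) < (h:ℝ) - (k:ℝ) := by
    have : (k:ℝ) < h := by exact_mod_cast hkh
    linarith
  -- averaging: (h-k) * A ≤ C
  have hsumle : ∑ i' ∈ H \ S, ∑ u ∈ S.erase j, w i' u ≤ C := by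
    have hsub1 : H \ S ⊆ Sᶜ := fun v hv => by
      simp only [Finset.mem_compl]; exact (Finset.mem_sdiff.mp hv).2
    have step1 : ∑ i' ∈ H \ S, ∑ u ∈ S.erase j, w i' u
        ≤ ∑ i' ∈ Sᶜ, ∑ u ∈ S.erase j, w i' u :=
      Finset.sum_le_sum_of_subset_of_nonneg hsub1 fun v _ _ =>
        Finset.sum_nonneg fun u _ => hnonneg v u
    have step2 : ∑ i' ∈ Sᶜ, ∑ u ∈ S.erase j, w i' u
        ≤ ∑ i' ∈ Sᶜ, ∑ u ∈ S, w i' u :=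
      Finset.sum_le_sum fun v _ =>
        Finset.sum_le_sum_of_subset_of_nonneg (Finset.erase_subset j S)
          fun u _ _ => hnonneg v u
    have step3 : ∑ i' ∈ Sᶜ, ∑ u ∈ S, w i' u = C := by
      rw [hC, cutVal, Finset.sum_comm]
      exact Finset.sum_congr rfl fun u _ => Finset.sum_congr rfl fun v _ => (hsymm u v).symm
    linarith
  have hcardA : ((H \ S).card : ℝ) * A ≤ ∑ i' ∈ H \ S, ∑ u ∈ S.erase j, w i' u := by
    have := Finset.card_nsmul_le_sum (H \ S) (fun i' => ∑ u ∈ S.erase j, w i' u) A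
      (fun i' hi' => hmin i' hi')
    simpa [nsmul_eq_mul] using this
  have hAle : ((h:ℝ) - (k:ℝ)) * A ≤ C := by
    have h1 : ((h:ℝ) - (k:ℝ)) ≤ ((H \ S).card : ℝ) := by
      have : ((h - k : ℕ) : ℝ) ≤ ((H \ S).card : ℝ) := by exact_mod_cast hcardHS
      rw [Nat.cast_sub hkh.le] at this
      linarith
    nlinarith
  -- the swap identity
  have hiSe : i ∉ S.erase j := fun hmem => hiS (Finset.mem_of_mem_erase hmem)
  have hnew : cutVal w (insert i (S.erase j))
      = cutVal w (S.erase j) + wdeg w i - 2 * A :=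
    cutVal_insert w hsymm (S.erase j) i hiSe
  have hjSe : j ∉ S.erase j := Finset.notMem_erase j S
  have hold : cutVal w S
      = cutVal w (S.erase j) + wdeg w j - 2 * ∑ u ∈ S.erase j, w j u := by
    have h := cutVal_insert w hsymm (S.erase j) j hjSe
    rwa [Finset.insert_erase hjS] at h
  have hdegij : wdeg w j ≤ wdeg w i := hdeg i hiH j hjH
  have hBj : 0 ≤ ∑ u ∈ S.erase j, w j u := Finset.sum_nonneg fun u _ => hnonneg j u
  -- conclude
  have hkey : C - 2 * A ≤ cutVal w (insert i (S.erase j)) := by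
    rw [hnew]; linarith
  have heq : (1 - 2 / ((h : ℝ) - (k : ℝ))) * C = C - 2 * C / ((h:ℝ) - (k:ℝ)) := by
    field_simp
  have h2A : 2 * A ≤ 2 * C / ((h:ℝ) - (k:ℝ)) := by
    rw [le_div_iff₀ hhk]; nlinarith
  linarith
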